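/- Define H_d^{(k)} : {±1}^(2p+2) → C iteratively by H_d^{(0)}(z) = 1 and H_d^{(k)}(z) = (Σ_{x : x_{p+1}=x_{-(p+1)}} exp(−i A·(xz)) H_d^{(k-1)}(x) f(x))^d, where f : {±1}^(2p+2) → C satisfies f(x') = −f(x) for x ∉ B₀, f(x) = 0 when T(x) = p+1, and Σ_{x∈B₀} f(x) = 1, and A is the antisymmetric parameter vector. Then for every 0 ≤ k ≤ p: H_d^{(k)}(a) = 1 whenever T(a) = 0, and H_d^{(k)}(a') = H_d^{(k)}(a) whenever T(a) > 0. -/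
import Mathlib


open Complex BigOperators

noncomputable section

abbrev Conf (p : ℕ) := (Fin (p + 1) → Bool) × (Fin (p + 1) → Bool)

def sgn : Bool → ℝ := fun b => if b then 1 else -1

def Tval {p : ℕ} (a : Conf p) : ℕ :=
  (Finset.univ.filter fun j : Fin (p + 1) => a.1 j ≠ a.2 j).sup fun j => (j : ℕ) + 1

def primeOp {p : ℕ} (a : Conf p) : Conf p :=
  (fun j => if Tval a < (j : ℕ) + 1 then !(a.1 j) else a.1 j,
   fun j => if Tval a < (j : ℕ) + 1 then !(a.2 j) else a.2 j)

/-- `A·(ab)` for the antisymmetric parameter vector `A = (α_1,…,α_p,0,0,−α_p,…,−α_1)`. -/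
def Adot {p : ℕ} (α : Fin p → ℝ) (a b : Conf p) : ℝ :=
  ∑ j : Fin p, α j * (sgn (a.1 j.castSucc) * sgn (b.1 j.castSucc)
      - sgn (a.2 j.castSucc) * sgn (b.2 j.castSucc))

/-- the iterates `H_d^{(k)}`: `H_d^{(0)} = 1` and
`H_d^{(k)}(z) = (Σ_{x : x_{p+1} = x_{-(p+1)}} e^{-i A·(xz)} H_d^{(k-1)}(x) f(x))^d`. -/
noncomputable def Hd {p : ℕ} (α : Fin p → ℝ) (f : Conf p → ℂ) (d : ℕ) : ℕ → Conf p → ℂ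
  | 0, _ => 1
  | k + 1, z =>
      (∑ x ∈ Finset.univ.filter (fun x : Conf p => x.1 (Fin.last p) = x.2 (Fin.last p)),
        Complex.exp (-I * ((Adot α x z : ℝ) : ℂ)) * Hd α f d k x * f x) ^ d

lemma sgn_not (b : Bool) : sgn (!b) = - sgn b := by cases b <;> simp [sgn]

lemma eq_of_Tval_lt {p : ℕ} (a : Conf p) (j : Fin (p + 1)) (h : Tval a < (j : ℕ) + 1) :
    a.1 j = a.2 j := by
  by_contra hne
  have : (j : ℕ) + 1 ≤ Tval a :=
    Finset.le_sup (f := fun j : Fin (p + 1) => (j : ℕ) + 1)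
      (Finset.mem_filter.mpr ⟨Finset.mem_univ _, hne⟩)
  omega

lemma Tval_eq_zero_iff {p : ℕ} (a : Conf p) : Tval a = 0 ↔ a.1 = a.2 := by
  constructor
  · intro h
    funext j
    exact eq_of_Tval_lt a j (by omega)
  · intro h
    unfold Tval
    have : (Finset.univ.filter fun j : Fin (p + 1) => a.1 j ≠ a.2 j) = ∅ := by
      simp [h]
    simp [this]

lemma Tval_le_iff {p : ℕ} (a : Conf p) :
    a.1 (Fin.last p) = a.2 (Fin.last p) ↔ Tval a ≤ p := by
  constructor
  · intro h
    refine Finset.sup_le ?_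
    intro j hj
    have hne := (Finset.mem_filter.mp hj).2
    have hjp : (j : ℕ) ≠ p := by
      intro hp
      exact hne (by rw [show j = Fin.last p from Fin.ext hp]; exact h)
    have := j.isLt
    omega
  · intro h
    exact eq_of_Tval_lt a (Fin.last p) (by simp [Fin.val_last]; omega)

lemma Tval_primeOp {p : ℕ} (a : Conf p) : Tval (primeOp a) = Tval a := by
  unfold Tval
  congr 1
  apply Finset.filter_congr
  intro j _
  simp only [primeOp]
  split <;> simp

lemma primeOp_apply_fst {p : ℕ} (a : Conf p) (j : Fin (p + 1)) :
    (primeOp a).1 j = if Tval a < (j : ℕ) + 1 then !(a.1 j) else a.1 j := rfl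

lemma primeOp_apply_snd {p : ℕ} (a : Conf p) (j : Fin (p + 1)) :
    (primeOp a).2 j = if Tval a < (j : ℕ) + 1 then !(a.2 j) else a.2 j := rfl

lemma primeOp_primeOp {p : ℕ} (a : Conf p) : primeOp (primeOp a) = a := by
  refine Prod.ext ?_ ?_ <;> funext j
  · rw [primeOp_apply_fst (primeOp a) j, Tval_primeOp, primeOp_apply_fst a j]
    by_cases hc : Tval a < (j : ℕ) + 1 <;> simp [hc]
  · rw [primeOp_apply_snd (primeOp a) j, Tval_primeOp, primeOp_apply_snd a j]
    by_cases hc : Tval a < (j : ℕ) + 1 <;> simp [hc]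

lemma Adot_comm {p : ℕ} (α : Fin p → ℝ) (a b : Conf p) : Adot α a b = Adot α b a := by
  unfold Adot
  apply Finset.sum_congr rfl
  intro j _
  ring

lemma Adot_primeOp_right {p : ℕ} (α : Fin p → ℝ) (x z : Conf p) (h : Tval x ≤ Tval z) :
    Adot α x (primeOp z) = Adot α x z := by
  unfold Adot
  apply Finset.sum_congr rfl
  intro j _
  by_cases hc : Tval z < ((j.castSucc : Fin (p + 1)) : ℕ) + 1
  · have hx : x.1 j.castSucc = x.2 j.castSucc := eq_of_Tval_lt x _ (by omega)
    have hz : z.1 j.castSucc = z.2 j.castSucc := eq_of_Tval_lt z _ hc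
    simp only [primeOp, if_pos hc]
    rw [hx, hz]
    ring
  · simp only [primeOp, if_neg hc]

lemma Adot_diag {p : ℕ} (α : Fin p → ℝ) (x z : Conf p) (hx : x.1 = x.2) (hz : z.1 = z.2) :
    Adot α x z = 0 := by
  unfold Adot
  apply Finset.sum_eq_zero
  intro j _
  rw [hx, hz]
  ring

lemma sum_cancel {p : ℕ} (α : Fin p → ℝ) (f g : Conf p → ℂ) (z : Conf p) (t : ℕ)
    (hzt : Tval z ≤ t)
    (hg : ∀ x : Conf p, 0 < Tval x → g (primeOp x) = g x)
    (hf1 : ∀ x : Conf p, x.1 ≠ x.2 → f (primeOp x) = -f x) :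
    ∑ x ∈ Finset.univ.filter
        (fun x : Conf p => x.1 (Fin.last p) = x.2 (Fin.last p) ∧ t < Tval x),
      Complex.exp (-I * ((Adot α x z : ℝ) : ℂ)) * g x * f x = 0 := by
  refine Finset.sum_involution (fun x _ => primeOp x) ?_ ?_ ?_ ?_
  · intro x hx
    obtain ⟨hlast, hxt⟩ := (Finset.mem_filter.mp hx).2
    have hxpos : 0 < Tval x := by omega
    have hxne : x.1 ≠ x.2 := fun h => by
      have := (Tval_eq_zero_iff x).mpr h; omega
    have hA : Adot α (primeOp x) z = Adot α x z := by
      rw [Adot_comm, Adot_primeOp_right α z x (by omega), Adot_comm]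
    rw [hA, hg x hxpos, hf1 x hxne]
    ring
  · intro x hx _
    obtain ⟨hlast, hxt⟩ := (Finset.mem_filter.mp hx).2
    intro hcontra
    replace hcontra : primeOp x = x := hcontra
    have hTp : Tval x ≤ p := (Tval_le_iff x).mp hlast
    have h1 : (primeOp x).1 (Fin.last p) = !(x.1 (Fin.last p)) := by
      simp only [primeOp]
      rw [if_pos (by simp [Fin.val_last]; omega)]
    rw [hcontra] at h1
    exact Bool.not_ne_self _ h1.symm
  · intro x hx
    obtain ⟨hlast, hxt⟩ := (Finset.mem_filter.mp hx).2
    refine Finset.mem_filter.mpr ⟨Finset.mem_univ _, ?_, ?_⟩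
    · exact (Tval_le_iff _).mpr (by rw [Tval_primeOp]; exact (Tval_le_iff x).mp hlast)
    · rw [Tval_primeOp]; exact hxt
  · intro x hx
    exact primeOp_primeOp x

theorem Hd_prime_invariant (p d : ℕ) (hd : 0 < d) (α : Fin p → ℝ) (f : Conf p → ℂ)
    (hf1 : ∀ x : Conf p, x.1 ≠ x.2 → f (primeOp x) = -f x)
    (hf2 : ∀ x : Conf p, Tval x = p + 1 → f x = 0)
    (hf3 : ∑ x ∈ Finset.univ.filter (fun x : Conf p => x.1 = x.2), f x = 1) :
    ∀ k ≤ p,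
      (∀ a : Conf p, Tval a = 0 → Hd α f d k a = 1) ∧
      (∀ a : Conf p, 0 < Tval a → Hd α f d k (primeOp a) = Hd α f d k a) := by
  intro k
  induction k with
  | zero =>
    intro _
    exact ⟨fun a _ => rfl, fun a _ => rfl⟩
  | succ n ih =>
    intro hk
    obtain ⟨ih1, ih2⟩ := ih (by omega)
    -- split of the inner sum at threshold t
    have hsplit : ∀ (z : Conf p) (t : ℕ), Tval z ≤ t →
        (∑ x ∈ Finset.univ.filter
            (fun x : Conf p => x.1 (Fin.last p) = x.2 (Fin.last p)),
          Complex.exp (-I * ((Adot α x z : ℝ) : ℂ)) * Hd α f d n x * f x) =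
        ∑ x ∈ Finset.univ.filter
            (fun x : Conf p => x.1 (Fin.last p) = x.2 (Fin.last p) ∧ Tval x ≤ t),
          Complex.exp (-I * ((Adot α x z : ℝ) : ℂ)) * Hd α f d n x * f x := by
      intro z t hzt
      rw [← Finset.sum_filter_add_sum_filter_not
        (Finset.univ.filter (fun x : Conf p => x.1 (Fin.last p) = x.2 (Fin.last p)))
        (fun x => Tval x ≤ t)
        (fun x => Complex.exp (-I * ((Adot α x z : ℝ) : ℂ)) * Hd α f d n x * f x)]
      rw [Finset.filter_filter, Finset.filter_filter]
      have hzero := sum_cancel α f (Hd α f d n) z t hzt ih2 hf1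
      have hsets : (Finset.univ.filter
          (fun x : Conf p => x.1 (Fin.last p) = x.2 (Fin.last p) ∧ ¬ Tval x ≤ t)) =
          (Finset.univ.filter
          (fun x : Conf p => x.1 (Fin.last p) = x.2 (Fin.last p) ∧ t < Tval x)) := by
        apply Finset.filter_congr
        intro x _
        simp [not_le]
      rw [hsets, hzero, add_zero]
    constructor
    · intro a ha
      have ha2 : a.1 = a.2 := (Tval_eq_zero_iff a).mp ha
      have hS := hsplit a 0 (by omega)
      rw [Hd, hS]
      have hset : (Finset.univ.filter
          (fun x : Conf p => x.1 (Fin.last p) = x.2 (Fin.last p) ∧ Tval x ≤ 0)) =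
          (Finset.univ.filter (fun x : Conf p => x.1 = x.2)) := by
        apply Finset.filter_congr
        intro x _
        constructor
        · rintro ⟨-, h0⟩
          exact (Tval_eq_zero_iff x).mp (Nat.le_zero.mp h0)
        · intro h
          exact ⟨by rw [h], Nat.le_zero.mpr ((Tval_eq_zero_iff x).mpr h)⟩
      rw [hset]
      have : ∀ x ∈ Finset.univ.filter (fun x : Conf p => x.1 = x.2),
          Complex.exp (-I * ((Adot α x a : ℝ) : ℂ)) * Hd α f d n x * f x = f x := by
        intro x hx
        have hx2 : x.1 = x.2 := (Finset.mem_filter.mp hx).2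
        rw [Adot_diag α x a hx2 ha2, ih1 x ((Tval_eq_zero_iff x).mpr hx2)]
        simp
      rw [Finset.sum_congr rfl this, hf3, one_pow]
    · intro a ha
      have hsum : (∑ x ∈ Finset.univ.filter
            (fun x : Conf p => x.1 (Fin.last p) = x.2 (Fin.last p)),
          Complex.exp (-I * ((Adot α x (primeOp a) : ℝ) : ℂ)) * Hd α f d n x * f x) =
          (∑ x ∈ Finset.univ.filter
            (fun x : Conf p => x.1 (Fin.last p) = x.2 (Fin.last p)),
          Complex.exp (-I * ((Adot α x a : ℝ) : ℂ)) * Hd α f d n x * f x) := by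
        rw [hsplit a (Tval a) le_rfl,
          hsplit (primeOp a) (Tval a) (by rw [Tval_primeOp])]
        apply Finset.sum_congr rfl
        intro x hx
        have hxt := (Finset.mem_filter.mp hx).2.2
        rw [Adot_primeOp_right α x a hxt]
      rw [Hd, Hd, hsum]
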